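/- A graph G contains no induced subgraph isomorphic to P3+P1 (the disjoint union of a 3-vertex path and an isolated vertex) if and only if every co-component of G (connected component of the complement) induces a subgraph that is 3P1-free or a disjoint union of complete graphs. -/

import Mathlib

open SimpleGraph

/-- A proper colouring of `G` given as a function to `ℕ`. -/
def IsProperColoring {V : Type*} (G : SimpleGraph V) (c : V → ℕ) : Prop :=
  ∀ u v, G.Adj u v → c u ≠ c v

/-- A vertex `v` is b-chromatic under `c`: it has a neighbour of every used colour
other than its own. -/
def IsBVertex {V : Type*} (G : SimpleGraph V) (c : V → ℕ) (v : V) : Prop :=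
  ∀ j ∈ Set.range c, j ≠ c v → ∃ u, G.Adj v u ∧ c u = j

/-- A b-colouring: a proper colouring in which every colour class contains a
b-chromatic vertex. -/
def IsBColoring {V : Type*} (G : SimpleGraph V) (c : V → ℕ) : Prop :=
  IsProperColoring G c ∧ ∀ j ∈ Set.range c, ∃ v, c v = j ∧ IsBVertex G c v

/-- The number of colours used by a colouring. -/
noncomputable def numColors {V : Type*} (c : V → ℕ) : ℕ := (Set.range c).ncard

/-- The b-chromatic number: the maximum number of colours in a b-colouring. -/
noncomputable def bChromaticNumber {V : Type*} (G : SimpleGraph V) : ℕ :=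
  sSup {k | ∃ c, IsBColoring G c ∧ numColors c = k}

/-- The m-degree `m(G)`: the largest `k` such that `G` has at least `k` vertices of
degree at least `k - 1`. -/
noncomputable def mDegree {V : Type*} (G : SimpleGraph V) : ℕ :=
  sSup {k | k ≤ {v : V | k ≤ (G.neighborSet v).ncard + 1}.ncard}

/-- The set of dense vertices: those of degree at least `m(G) - 1`. -/
def denseSet {V : Type*} (G : SimpleGraph V) : Set V :=
  {v | mDegree G ≤ (G.neighborSet v).ncard + 1}

/-- A graph is tight if it has exactly `m(G)` dense vertices, each of degree
exactly `m(G) - 1`. -/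
def IsTight {V : Type*} (G : SimpleGraph V) : Prop :=
  (denseSet G).ncard = mDegree G ∧
    ∀ v ∈ denseSet G, (G.neighborSet v).ncard = mDegree G - 1

/-- A fall colouring: a proper colouring in which every vertex has a neighbour of
every used colour other than its own. -/
def IsFallColoring {V : Type*} (G : SimpleGraph V) (c : V → ℕ) : Prop :=
  IsProperColoring G c ∧ ∀ v, ∀ j ∈ Set.range c, j ≠ c v → ∃ u, G.Adj v u ∧ c u = j

/-- The fall spectrum: the set of numbers of colours of fall colourings of `G`. -/
def fallSpectrum {V : Type*} (G : SimpleGraph V) : Set ℕ :=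
  {k | ∃ c, IsFallColoring G c ∧ numColors c = k}

/-- The outer boundary of a vertex set: vertices outside it with a neighbour in it. -/
def outerBoundary {V : Type*} (G : SimpleGraph V) (T : Set V) : Set V :=
  {s | s ∉ T ∧ ∃ t ∈ T, G.Adj s t}

/-- `P_3 + P_1`: the path `0 - 1 - 2` together with the isolated vertex `3`. -/
def p3p1Graph : SimpleGraph (Fin 4) :=
  SimpleGraph.fromRel (fun a b => (a = 0 ∧ b = 1) ∨ (a = 1 ∧ b = 2))

/-- `G` has no induced subgraph isomorphic to `H`. -/
def IndSubgraphFree {W V : Type*} (H : SimpleGraph W) (G : SimpleGraph V) : Prop :=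
  ∀ s : Set V, ¬ Nonempty (G.induce s ≃g H)

/-- `H` is `3P_1`-free: it has no independent set of three (distinct) vertices. -/
def ThreeP1Free {W : Type*} (H : SimpleGraph W) : Prop :=
  ∀ u v w : W, u ≠ v → u ≠ w → v ≠ w →
    ¬ H.Adj u v → ¬ H.Adj u w → ¬ H.Adj v w → False

/-- `H` is a disjoint union of complete graphs: two vertices are adjacent iff they
are distinct and lie in the same part of some partition. -/
def IsDisjointUnionOfCompleteGraphs {W : Type*} (H : SimpleGraph W) : Prop :=
  ∃ (ι : Type) (p : W → ι), ∀ u v, H.Adj u v ↔ (u ≠ v ∧ p u = p v)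

lemma quad_of_free {V : Type} {G : SimpleGraph V} (h : IndSubgraphFree p3p1Graph G) :
    ∀ a b c d : V, G.Adj a b → G.Adj b c → ¬ G.Adj a c → a ≠ c →
      d ≠ a → d ≠ b → d ≠ c → ¬ G.Adj d a → ¬ G.Adj d b → ¬ G.Adj d c → False := by
  classical
  intro a b c d hab hbc hac hacne hda hdb hdc hnda hndb hndc
  have e1 : a ≠ b := hab.ne
  have e2 : b ≠ c := hbc.ne
  set s : Set V := {a, b, c, d} with hs
  have ha : a ∈ s := by simp [hs]
  have hb : b ∈ s := by simp [hs]
  have hc : c ∈ s := by simp [hs]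
  have hd : d ∈ s := by simp [hs]
  let f : Fin 4 → ↥s := ![⟨a, ha⟩, ⟨b, hb⟩, ⟨c, hc⟩, ⟨d, hd⟩]
  have hinj : Function.Injective f := by
    intro i j hij
    fin_cases i <;> fin_cases j <;>
      simp_all [f, Subtype.ext_iff, e1, e2, hacne, hda, hdb, hdc,
        e1.symm, e2.symm, hacne.symm, hda.symm, hdb.symm, hdc.symm]
  have hsurj : Function.Surjective f := by
    rintro ⟨x, hx⟩
    simp only [hs, Set.mem_insert_iff, Set.mem_singleton_iff] at hx
    rcases hx with rfl | rfl | rfl | rfl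
    · exact ⟨0, rfl⟩
    · exact ⟨1, rfl⟩
    · exact ⟨2, rfl⟩
    · exact ⟨3, rfl⟩
  have hGadj : ∀ i j : Fin 4, (G.induce s).Adj (f i) (f j) ↔ p3p1Graph.Adj i j := by
    intro i j
    fin_cases i <;> fin_cases j <;>
      simp [f, p3p1Graph, SimpleGraph.fromRel_adj, comap_adj, hab, hbc, hac, hnda, hndb, hndc,
        G.adj_comm, Fin.ext_iff, - Fin.val_eq_zero_iff] <;>
      first
        | decide
        | (exact iff_of_false (fun h' => absurd h'.symm (by assumption)) (by decide))
        | (exact fun h' => absurd h'.symm (by assumption))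
  exact h s ⟨(RelIso.mk (Equiv.ofBijective f ⟨hinj, hsurj⟩) (fun {i j} => hGadj i j)).symm⟩

lemma free_of_quad {V : Type} {G : SimpleGraph V}
    (h : ∀ a b c d : V, G.Adj a b → G.Adj b c → ¬ G.Adj a c → a ≠ c →
      d ≠ a → d ≠ b → d ≠ c → ¬ G.Adj d a → ¬ G.Adj d b → ¬ G.Adj d c → False) :
    IndSubgraphFree p3p1Graph G := by
  rintro s ⟨e⟩
  have g := e.symm
  have hadj : ∀ i j : Fin 4, G.Adj (g i) (g j) ↔ p3p1Graph.Adj i j := by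
    intro i j
    rw [← g.map_adj_iff]
    rfl
  have hne : ∀ i j : Fin 4, i ≠ j → (g i : V) ≠ (g j : V) := by
    intro i j hij hc
    exact hij (g.injective (Subtype.ext hc))
  have P : ∀ i j : Fin 4, p3p1Graph.Adj i j ↔
      ((i = 0 ∧ j = 1) ∨ (i = 1 ∧ j = 0) ∨ (i = 1 ∧ j = 2) ∨ (i = 2 ∧ j = 1)) := by
    intro i j
    simp only [p3p1Graph, SimpleGraph.fromRel_adj]
    fin_cases i <;> fin_cases j <;> simp <;> decide
  refine h (g 0) (g 1) (g 2) (g 3) ?_ ?_ ?_ ?_ ?_ ?_ ?_ ?_ ?_ ?_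
  · exact (hadj 0 1).2 ((P 0 1).2 (by decide))
  · exact (hadj 1 2).2 ((P 1 2).2 (by decide))
  · intro hc; exact absurd ((P 0 2).1 ((hadj 0 2).1 hc)) (by decide)
  · exact hne 0 2 (by decide)
  · exact hne 3 0 (by decide)
  · exact hne 3 1 (by decide)
  · exact hne 3 2 (by decide)
  · intro hc; exact absurd ((P 3 0).1 ((hadj 3 0).1 hc)) (by decide)
  · intro hc; exact absurd ((P 3 1).1 ((hadj 3 1).1 hc)) (by decide)
  · intro hc; exact absurd ((P 3 2).1 ((hadj 3 2).1 hc)) (by decide)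

section Core

variable {V : Type} {G : SimpleGraph V}

def Rrel (G : SimpleGraph V) (x y : V) : Prop := x = y ∨ Gᶜ.Adj x y

def Qprop (G : SimpleGraph V) (u v w x : V) : Prop :=
  (Rrel G x u ∧ Rrel G x v) ∨ (Rrel G x u ∧ Rrel G x w) ∨ (Rrel G x v ∧ Rrel G x w)

variable (hquad : ∀ a b c d : V, G.Adj a b → G.Adj b c → ¬ G.Adj a c → a ≠ c →
      d ≠ a → d ≠ b → d ≠ c → ¬ G.Adj d a → ¬ G.Adj d b → ¬ G.Adj d c → False)

lemma Rrel.symm' {x y : V} (h : Rrel G x y) : Rrel G y x := by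
  rcases h with h | h
  · exact Or.inl h.symm
  · exact Or.inr h.symm

include hquad

lemma pendant {t1 t2 t3 s : V}
    (h12 : Gᶜ.Adj t1 t2) (h13 : Gᶜ.Adj t1 t3) (h23 : Gᶜ.Adj t2 t3)
    (hs1 : Gᶜ.Adj s t1) (hs2 : s ≠ t2) (hs3 : s ≠ t3) :
    Gᶜ.Adj s t2 ∨ Gᶜ.Adj s t3 := by
  by_contra hcon
  push_neg at hcon
  obtain ⟨hc2, hc3⟩ := hcon
  have ha2 : G.Adj s t2 := by
    by_contra hx; exact hc2 ((G.compl_adj s t2).2 ⟨hs2, hx⟩)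
  have ha3 : G.Adj s t3 := by
    by_contra hx; exact hc3 ((G.compl_adj s t3).2 ⟨hs3, hx⟩)
  obtain ⟨hne12, hn12⟩ := (G.compl_adj t1 t2).1 h12
  obtain ⟨hne13, hn13⟩ := (G.compl_adj t1 t3).1 h13
  obtain ⟨hne23, hn23⟩ := (G.compl_adj t2 t3).1 h23
  obtain ⟨hnes1, hns1⟩ := (G.compl_adj s t1).1 hs1
  exact hquad t2 s t3 t1 ha2.symm ha3 hn23 hne23 hne12 hnes1.symm hne13
    hn12 (fun hx => hns1 hx.symm) hn13

/-- case b = u : the middle vertex of the P3 is a triangle vertex -/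
lemma case1 {u v w a c : V}
    (huv : Gᶜ.Adj u v) (huw : Gᶜ.Adj u w) (hvw : Gᶜ.Adj v w)
    (hQa : Qprop G u v w a) (hQc : Qprop G u v w c)
    (hac : Gᶜ.Adj a c) (hau : ¬ Rrel G a u) (hcu : ¬ Rrel G c u) : False := by
  have hav : Gᶜ.Adj a v := by
    rcases hQa with ⟨h1, h2⟩ | ⟨h1, h2⟩ | ⟨h1, h2⟩
    · rcases h2 with rfl | h2
      · exact absurd (Or.inr huv.symm) hau
      · exact h2
    · exact absurd h1 hau
    · rcases h1 with rfl | h1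
      · exact absurd (Or.inr huv.symm) hau
      · exact h1
  have haw : Gᶜ.Adj a w := by
    rcases hQa with ⟨h1, h2⟩ | ⟨h1, h2⟩ | ⟨h1, h2⟩
    · exact absurd h1 hau
    · exact absurd h1 hau
    · rcases h2 with rfl | h2
      · exact absurd (Or.inr huw.symm) hau
      · exact h2
  have hcv : Gᶜ.Adj c v := by
    rcases hQc with ⟨h1, h2⟩ | ⟨h1, h2⟩ | ⟨h1, h2⟩
    · rcases h2 with rfl | h2
      · exact absurd (Or.inr huv.symm) hcu
      · exact h2
    · exact absurd h1 hcu
    · rcases h1 with rfl | h1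
      · exact absurd (Or.inr huv.symm) hcu
      · exact h1
  have hua : ¬ Gᶜ.Adj u a := fun h => hau (Or.inr h.symm)
  have huc : ¬ Gᶜ.Adj u c := fun h => hcu (Or.inr h.symm)
  have hune_a : u ≠ a := fun h => hau (Or.inl h.symm)
  have hune_c : u ≠ c := fun h => hcu (Or.inl h.symm)
  rcases pendant hquad hav.symm hcv.symm hac huv hune_a hune_c with h | h
  · exact hua h
  · exact huc h

/-- the core: b adjacent (in the complement) to triangle vertices t1 t2 -/
lemma endA {t1 t2 t3 a b c : V}
    (h12 : Gᶜ.Adj t1 t2) (h13 : Gᶜ.Adj t1 t3) (h23 : Gᶜ.Adj t2 t3)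
    (hQa : Qprop G t1 t2 t3 a) (hQc : Qprop G t1 t2 t3 c)
    (hb1 : Rrel G b t1) (hb2 : Rrel G b t2)
    (hac : Gᶜ.Adj a c) (hba : ¬ Rrel G b a) (hbc : ¬ Rrel G b c) : False := by
  have hba' : ¬ Rrel G a b := fun h => hba h.symm'
  have hbc' : ¬ Rrel G c b := fun h => hbc h.symm'
  rcases hb1 with rfl | hb1
  · exact case1 hquad h12 h13 h23 hQa hQc hac hba' hbc'
  rcases hb2 with rfl | hb2
  · refine case1 hquad h12.symm h23 h13 ?_ ?_ hac hba' hbc' <;>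
      · unfold Qprop at *; tauto
  by_cases hb3 : b = t3
  · subst hb3
    refine case1 hquad h13.symm h23.symm h12 ?_ ?_ hac hba' hbc' <;>
      · unfold Qprop at *; tauto
  have hbna : b ≠ a ∧ ¬ Gᶜ.Adj b a := by
    constructor
    · exact fun h => hba (Or.inl h)
    · exact fun h => hba (Or.inr h)
  have hbnc : b ≠ c ∧ ¬ Gᶜ.Adj b c := by
    constructor
    · exact fun h => hbc (Or.inl h)
    · exact fun h => hbc (Or.inr h)
  have hat1ne : a ≠ t1 := fun h => hbna.2 (h ▸ hb1)
  have hat2ne : a ≠ t2 := fun h => hbna.2 (h ▸ hb2)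
  have hct1ne : c ≠ t1 := fun h => hbnc.2 (h ▸ hb1)
  have hct2ne : c ≠ t2 := fun h => hbnc.2 (h ▸ hb2)
  -- structure of Q a
  have haQ : (Rrel G a t3 ∧ (Gᶜ.Adj a t1 ∨ Gᶜ.Adj a t2)) ∨ (Gᶜ.Adj a t1 ∧ Gᶜ.Adj a t2) := by
    rcases hQa with ⟨h1, h2⟩ | ⟨h1, h2⟩ | ⟨h1, h2⟩
    · exact Or.inr ⟨h1.resolve_left hat1ne, h2.resolve_left hat2ne⟩
    · exact Or.inl ⟨h2, Or.inl (h1.resolve_left hat1ne)⟩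
    · exact Or.inl ⟨h2, Or.inr (h1.resolve_left hat2ne)⟩
  have hcQ : (Rrel G c t3 ∧ (Gᶜ.Adj c t1 ∨ Gᶜ.Adj c t2)) ∨ (Gᶜ.Adj c t1 ∧ Gᶜ.Adj c t2) := by
    rcases hQc with ⟨h1, h2⟩ | ⟨h1, h2⟩ | ⟨h1, h2⟩
    · exact Or.inr ⟨h1.resolve_left hct1ne, h2.resolve_left hct2ne⟩
    · exact Or.inl ⟨h2, Or.inl (h1.resolve_left hct1ne)⟩
    · exact Or.inl ⟨h2, Or.inr (h1.resolve_left hct2ne)⟩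
  -- sub-case A/B : a and c share a neighbour among t1, t2
  have subAB : ∀ t : V, Gᶜ.Adj b t → Gᶜ.Adj a t → Gᶜ.Adj c t → False := by
    intro t hbt hat hct
    rcases pendant hquad hat.symm hct.symm hac hbt hbna.1 hbnc.1 with h | h
    · exact hbna.2 h
    · exact hbnc.2 h
  have hax : Gᶜ.Adj a t1 ∨ Gᶜ.Adj a t2 := by tauto
  have hcx : Gᶜ.Adj c t1 ∨ Gᶜ.Adj c t2 := by tauto
  have hra3 : Rrel G a t3 := by
    rcases haQ with ⟨h, _⟩ | ⟨h1, h2⟩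
    · exact h
    · rcases hcx with h | h
      · exact absurd (subAB t1 hb1 h1 h) id
      · exact absurd (subAB t2 hb2 h2 h) id
  have hrc3 : Rrel G c t3 := by
    rcases hcQ with ⟨h, _⟩ | ⟨h1, h2⟩
    · exact h
    · rcases hax with h | h
      · exact absurd (subAB t1 hb1 h h1) id
      · exact absurd (subAB t2 hb2 h h2) id
  by_cases hbw : Gᶜ.Adj b t3
  · have hat3ne : a ≠ t3 := fun h => hbna.2 (h ▸ hbw)
    have hct3ne : c ≠ t3 := fun h => hbnc.2 (h ▸ hbw)
    exact subAB t3 hbw (hra3.resolve_left hat3ne) (hrc3.resolve_left hct3ne)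
  · by_cases hat3 : a = t3
    · -- a = t3, use c
      have hct3ne : c ≠ t3 := fun h => (Gᶜ.irrefl (hat3 ▸ h ▸ hac))
      have hct3 : Gᶜ.Adj c t3 := hrc3.resolve_left hct3ne
      rcases hcx with h | h
      · rcases pendant hquad h.symm h13 hct3 hb1 hbnc.1 hb3 with hh | hh
        · exact hbnc.2 hh
        · exact hbw hh
      · rcases pendant hquad h.symm h23 hct3 hb2 hbnc.1 hb3 with hh | hh
        · exact hbnc.2 hh
        · exact hbw hh
    · have hat3' : Gᶜ.Adj a t3 := hra3.resolve_left hat3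
      rcases hax with h | h
      · rcases pendant hquad h.symm h13 hat3' hb1 hbna.1 hb3 with hh | hh
        · exact hbna.2 hh
        · exact hbw hh
      · rcases pendant hquad h.symm h23 hat3' hb2 hbna.1 hb3 with hh | hh
        · exact hbna.2 hh
        · exact hbw hh

/-- no induced P3 among vertices satisfying Q -/
lemma noP3core {u v w a b c : V}
    (huv : Gᶜ.Adj u v) (huw : Gᶜ.Adj u w) (hvw : Gᶜ.Adj v w)
    (hQa : Qprop G u v w a) (hQb : Qprop G u v w b) (hQc : Qprop G u v w c)
    (hac : Gᶜ.Adj a c) (hba : ¬ Rrel G b a) (hbc : ¬ Rrel G b c) : False := by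
  rcases hQb with ⟨h1, h2⟩ | ⟨h1, h2⟩ | ⟨h1, h2⟩
  · exact endA hquad huv huw hvw hQa hQc h1 h2 hac hba hbc
  · refine endA hquad huw huv hvw.symm ?_ ?_ h1 h2 hac hba hbc <;>
      · unfold Qprop at *; tauto
  · refine endA hquad hvw huv.symm huw.symm ?_ ?_ h1 h2 hac hba hbc <;>
      · unfold Qprop at *; tauto

/-- one-tri etc -/

lemma one_tri {u v w y : V}
    (huv : Gᶜ.Adj u v) (huw : Gᶜ.Adj u w) (hvw : Gᶜ.Adj v w)
    (hyu : Gᶜ.Adj y u) : Qprop G u v w y := by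
  by_cases h2 : y = v
  · exact Or.inl ⟨Or.inr hyu, Or.inl h2⟩
  by_cases h3 : y = w
  · exact Or.inr (Or.inl ⟨Or.inr hyu, Or.inl h3⟩)
  rcases pendant hquad huv huw hvw hyu h2 h3 with h | h
  · exact Or.inl ⟨Or.inr hyu, Or.inr h⟩
  · exact Or.inr (Or.inl ⟨Or.inr hyu, Or.inr h⟩)

lemma one_tri_v {u v w y : V}
    (huv : Gᶜ.Adj u v) (huw : Gᶜ.Adj u w) (hvw : Gᶜ.Adj v w)
    (hyv : Gᶜ.Adj y v) : Qprop G u v w y := by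
  have := one_tri hquad huv.symm hvw huw hyv
  unfold Qprop at this ⊢; tauto

lemma one_tri_w {u v w y : V}
    (huv : Gᶜ.Adj u v) (huw : Gᶜ.Adj u w) (hvw : Gᶜ.Adj v w)
    (hyw : Gᶜ.Adj y w) : Qprop G u v w y := by
  have := one_tri hquad huw.symm hvw.symm huv hyw
  unfold Qprop at this ⊢; tauto

/-- Q is closed under complement-adjacency -/
lemma qClosure {u v w x y : V}
    (huv : Gᶜ.Adj u v) (huw : Gᶜ.Adj u w) (hvw : Gᶜ.Adj v w)
    (hQ : Qprop G u v w x) (hxy : Gᶜ.Adj x y) : Qprop G u v w y := by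
  -- helper: from R x t1, R x t2 with t1 ~ t2 (both triangle vertices)
  have key : ∀ t1 t2 : V, Gᶜ.Adj t1 t2 → Rrel G x t1 → Rrel G x t2 →
      (Gᶜ.Adj y t1 → Qprop G u v w y) → (Gᶜ.Adj y t2 → Qprop G u v w y) →
      Qprop G u v w y := by
    intro t1 t2 ht12 hr1 hr2 hone1 hone2
    rcases hr1 with rfl | hxt1
    · exact hone1 hxy.symm
    rcases hr2 with rfl | hxt2
    · exact hone2 hxy.symm
    by_cases hy1 : y = t1
    · exact hone2 (hy1 ▸ ht12)
    by_cases hy2 : y = t2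
    · exact hone1 (hy2 ▸ ht12.symm)
    rcases pendant hquad hxt1 hxt2 ht12 hxy.symm hy1 hy2 with h | h
    · exact hone1 h
    · exact hone2 h
  rcases hQ with ⟨h1, h2⟩ | ⟨h1, h2⟩ | ⟨h1, h2⟩
  · exact key u v huv h1 h2 (one_tri hquad huv huw hvw)
      (one_tri_v hquad huv huw hvw)
  · exact key u w huw h1 h2 (one_tri hquad huv huw hvw)
      (one_tri_w hquad huv huw hvw)
  · exact key v w hvw h1 h2 (one_tri_v hquad huv huw hvw)
      (one_tri_w hquad huv huw hvw)

/-- Q propagates along walks in the complement -/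

lemma q_of_reachable {u v w x y : V}
    (huv : Gᶜ.Adj u v) (huw : Gᶜ.Adj u w) (hvw : Gᶜ.Adj v w)
    (hr : Gᶜ.Reachable x y) (hQ : Qprop G u v w x) : Qprop G u v w y := by
  obtain ⟨p⟩ := hr
  induction p with
  | nil => exact hQ
  | cons h p ih => exact ih (qClosure hquad huv huw hvw hQ h)

end Core

theorem stmt6 {V : Type} [Fintype V] (G : SimpleGraph V) :
    IndSubgraphFree p3p1Graph G ↔
    ∀ K : (Gᶜ).ConnectedComponent,
      ThreeP1Free (G.induce K.supp) ∨
      IsDisjointUnionOfCompleteGraphs (G.induce K.supp) := by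
  classical
  constructor
  · intro hfree K
    have hquad := quad_of_free hfree
    by_cases h3 : ThreeP1Free (G.induce K.supp)
    · exact Or.inl h3
    right
    unfold ThreeP1Free at h3
    push_neg at h3
    obtain ⟨u', v', w', huv', huw', hvw', nuv, nuw, nvw⟩ := h3
    have cuv : Gᶜ.Adj ↑u' ↑v' := (G.compl_adj _ _).2
      ⟨fun h => huv' (Subtype.ext h), by simpa using nuv⟩
    have cuw : Gᶜ.Adj ↑u' ↑w' := (G.compl_adj _ _).2
      ⟨fun h => huw' (Subtype.ext h), by simpa using nuw⟩
    have cvw : Gᶜ.Adj ↑v' ↑w' := (G.compl_adj _ _).2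
      ⟨fun h => hvw' (Subtype.ext h), by simpa using nvw⟩
    have reach : ∀ m : ↥K.supp, Gᶜ.Reachable ↑u' ↑m := by
      intro m
      exact ConnectedComponent.eq.1
        (((ConnectedComponent.mem_supp_iff K ↑u').1 u'.2).trans
          ((ConnectedComponent.mem_supp_iff K ↑m).1 m.2).symm)
    have QU : Qprop G ↑u' ↑v' ↑w' ↑u' := Or.inl ⟨Or.inl rfl, Or.inr cuv⟩
    have Qall : ∀ m : ↥K.supp, Qprop G ↑u' ↑v' ↑w' ↑m := fun m =>
      q_of_reachable hquad cuv cuw cvw (reach m) QU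
    have htrans : ∀ x y z : ↥K.supp, (G.induce K.supp).Adj x y →
        (G.induce K.supp).Adj y z → x ≠ z → (G.induce K.supp).Adj x z := by
      intro x y z hxy hyz hxz
      by_contra hnadj
      have gxy : G.Adj ↑x ↑y := by simpa using hxy
      have gyz : G.Adj ↑y ↑z := by simpa using hyz
      have gnxz : ¬ G.Adj ↑x ↑z := by simpa using hnadj
      have hxzne : (↑x : V) ≠ ↑z := fun h => hxz (Subtype.ext h)
      have hacC : Gᶜ.Adj ↑x ↑z := (G.compl_adj _ _).2 ⟨hxzne, gnxz⟩
      have hba : ¬ Rrel G ↑y ↑x := by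
        rintro (h | h)
        · exact G.irrefl (h ▸ gxy)
        · exact ((G.compl_adj _ _).1 h).2 gxy.symm
      have hbc : ¬ Rrel G ↑y ↑z := by
        rintro (h | h)
        · exact G.irrefl (h ▸ gyz.symm)
        · exact ((G.compl_adj _ _).1 h).2 gyz
      exact noP3core hquad cuv cuw cvw (Qall x) (Qall y) (Qall z) hacC hba hbc
    have heq : Equivalence (fun x y : ↥K.supp => x = y ∨ (G.induce K.supp).Adj x y) := by
      constructor
      · exact fun x => Or.inl rfl
      · rintro x y (rfl | h)
        · exact Or.inl rfl
        · exact Or.inr h.symm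
      · rintro x y z (rfl | h1) h2
        · exact h2
        · rcases h2 with rfl | h2
          · exact Or.inr h1
          · by_cases hxz : x = z
            · exact Or.inl hxz
            · exact Or.inr (htrans x y z h1 h2 hxz)
    refine ⟨Quotient ⟨_, heq⟩, Quotient.mk _, fun x y => ?_⟩
    constructor
    · intro h
      exact ⟨h.ne, Quotient.sound (Or.inr h)⟩
    · rintro ⟨hne, hpq⟩
      rcases Quotient.exact hpq with h | h
      · exact absurd h hne
      · exact h
  · intro hK
    apply free_of_quad
    intro a b c d hab hbc hac hacne hda hdb hdc hnda hndb hndc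
    set K := Gᶜ.connectedComponentMk d with hKdef
    have hda' : Gᶜ.Adj d a := (G.compl_adj _ _).2 ⟨hda, hnda⟩
    have hdb' : Gᶜ.Adj d b := (G.compl_adj _ _).2 ⟨hdb, hndb⟩
    have hdc' : Gᶜ.Adj d c := (G.compl_adj _ _).2 ⟨hdc, hndc⟩
    have md : d ∈ K.supp := (ConnectedComponent.mem_supp_iff K d).2 rfl
    have ma : a ∈ K.supp := (ConnectedComponent.mem_supp_iff K a).2
      (ConnectedComponent.eq.2 hda'.symm.reachable)
    have mb : b ∈ K.supp := (ConnectedComponent.mem_supp_iff K b).2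
      (ConnectedComponent.eq.2 hdb'.symm.reachable)
    have mc : c ∈ K.supp := (ConnectedComponent.mem_supp_iff K c).2
      (ConnectedComponent.eq.2 hdc'.symm.reachable)
    rcases hK K with h | ⟨ι, p, hp⟩
    · exact h ⟨a, ma⟩ ⟨c, mc⟩ ⟨d, md⟩
        (fun h' => hacne (congrArg Subtype.val h'))
        (fun h' => hda (congrArg Subtype.val h').symm)
        (fun h' => hdc (congrArg Subtype.val h').symm)
        (by simpa using hac)
        (by simpa using (fun h' : G.Adj a d => hnda h'.symm))
        (by simpa using (fun h' : G.Adj c d => hndc h'.symm))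
    · have h1 := (hp ⟨a, ma⟩ ⟨b, mb⟩).1 (by simpa using hab)
      have h2 := (hp ⟨b, mb⟩ ⟨c, mc⟩).1 (by simpa using hbc)
      have h3 := (hp ⟨a, ma⟩ ⟨c, mc⟩).2
        ⟨fun h' => hacne (congrArg Subtype.val h'), h1.2.trans h2.2⟩
      exact hac (by simpa using h3)
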